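/- Let D be a selfadjoint contraction on M, N : D_D-range-closure → K a contraction, X a selfadjoint contraction on the closure of ran D_{N*} (extended by 0), and define C = D_D N*, F = -N D N* + D_{N*} X D_{N*}, where D_D = (I - D²)^{1/2} and D_{N*} = (I - NN*)^{1/2}. Then the block operator T = [[D, C],[C*, F]] on M ⊕ K is a selfadjoint contraction, and F' := F + N(I+D)N* and F'' := F - N(I-D)N* are selfadjoint contractions on K with F' - F'' = 2NN*. -/

import Mathlib

open scoped ComplexInnerProductSpace

private lemma sa_norm_le_one {H : Type*} [NormedAddCommGroup H] [InnerProductSpace ℂ H]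
    [CompleteSpace H] {T : H →L[ℂ] H} (hsa : IsSelfAdjoint T)
    (hub : ∀ x : H, (⟪T x, x⟫).re ≤ (⟪x, x⟫ : ℂ).re)
    (hlb : ∀ x : H, -(⟪x, x⟫ : ℂ).re ≤ (⟪T x, x⟫).re) : ‖T‖ ≤ 1 := by
  have hle : T ≤ 1 := by
    rw [ContinuousLinearMap.le_def]
    refine ⟨ContinuousLinearMap.isSelfAdjoint_iff_isSymmetric.mp ((IsSelfAdjoint.one _).sub hsa), fun x => ?_⟩
    have := hub x
    simp only [ContinuousLinearMap.reApplyInnerSelf_apply, ContinuousLinearMap.sub_apply,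
      ContinuousLinearMap.one_apply, inner_sub_left]
    simp only [RCLike.re_to_complex, Complex.sub_re]
    linarith
  have hge : -1 ≤ T := by
    rw [ContinuousLinearMap.le_def]
    refine ⟨ContinuousLinearMap.isSelfAdjoint_iff_isSymmetric.mp (hsa.sub ((IsSelfAdjoint.one _).neg)), fun x => ?_⟩
    have := hlb x
    simp only [ContinuousLinearMap.reApplyInnerSelf_apply, sub_neg_eq_add,
      ContinuousLinearMap.add_apply, ContinuousLinearMap.one_apply, inner_add_left]
    simp only [RCLike.re_to_complex, Complex.add_re]
    linarith
  by_cases hnt : Nontrivial (H →L[ℂ] H)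
  · have h1 : ∀ x ∈ spectrum ℝ T, x ≤ 1 := by
      have := (le_algebraMap_iff_spectrum_le (r := (1:ℝ)) (a := T) hsa).mp
      rw [map_one] at this
      exact this hle
    have h2 : ∀ x ∈ spectrum ℝ T, (-1:ℝ) ≤ x := by
      have := (algebraMap_le_iff_le_spectrum (r := (-1:ℝ)) (a := T) hsa).mp
      apply this
      rw [map_neg, map_one]
      exact hge
    rcases CStarAlgebra.norm_or_neg_norm_mem_spectrum (a := T) hsa with h | h
    · exact h1 _ h
    · have := h2 _ h; linarith
  · rw [not_nontrivial_iff_subsingleton] at hnt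
    rw [Subsingleton.elim T 0]
    simp

set_option maxHeartbeats 1000000 in
private lemma defect_factor {M : Type*} [NormedAddCommGroup M] [InnerProductSpace ℂ M]
    [CompleteSpace M] {D DD : M →L[ℂ] M} (hDsa : IsSelfAdjoint D) (hDc : ‖D‖ ≤ 1)
    (hDDsa : IsSelfAdjoint DD) (hDDnn : ∀ f : M, 0 ≤ (⟪DD f, f⟫).re)
    (hDDsq : DD * DD = 1 - D * D) :
    ∃ A B : M →L[ℂ] M, IsSelfAdjoint A ∧ IsSelfAdjoint B ∧
      A * A = 1 + D ∧ B * B = 1 - D ∧ A * B = DD ∧ B * A = DD := by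
  rcases subsingleton_or_nontrivial M with hM | hM
  · have hsub : Subsingleton (M →L[ℂ] M) := ⟨fun f g => by ext x; exact Subsingleton.elim _ _⟩
    exact ⟨0, 0, (IsSelfAdjoint.zero _), (IsSelfAdjoint.zero _),
      Subsingleton.elim _ _, Subsingleton.elim _ _, Subsingleton.elim _ _,
      Subsingleton.elim _ _⟩
  have hs : ∀ x ∈ spectrum ℝ D, |x| ≤ 1 := fun x hx => by
    have := spectrum.norm_le_norm_of_mem hx
    rw [Real.norm_eq_abs] at this
    exact this.trans hDc
  set fA : ℝ → ℝ := fun x => Real.sqrt (1 + x) with hfA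
  set fB : ℝ → ℝ := fun x => Real.sqrt (1 - x) with hfB
  have hcA : Continuous fA := Real.continuous_sqrt.comp (by continuity)
  have hcB : Continuous fB := Real.continuous_sqrt.comp (by continuity)
  have hA2 : cfc fA D * cfc fA D = 1 + D := by
    rw [← cfc_mul fA fA D hcA.continuousOn hcA.continuousOn]
    have h : cfc (fun x => fA x * fA x) D = cfc (fun x : ℝ => 1 + x) D := by
      apply cfc_congr
      intro x hx
      have h1 : (0:ℝ) ≤ 1 + x := by have := abs_le.mp (hs x hx); linarith
      simp [hfA, Real.mul_self_sqrt h1]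
    rw [h, cfc_add (a := D) (f := fun _ => (1:ℝ)) (g := fun x => x), cfc_const_one ℝ D,
      cfc_id' ℝ D]
  have hB2 : cfc fB D * cfc fB D = 1 - D := by
    rw [← cfc_mul fB fB D hcB.continuousOn hcB.continuousOn]
    have h : cfc (fun x => fB x * fB x) D = cfc (fun x : ℝ => 1 - x) D := by
      apply cfc_congr
      intro x hx
      have h1 : (0:ℝ) ≤ 1 - x := by have := abs_le.mp (hs x hx); linarith
      simp [hfB, Real.mul_self_sqrt h1]
    rw [h, cfc_sub (a := D) (f := fun _ => (1:ℝ)) (g := fun x => x), cfc_const_one ℝ D,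
      cfc_id' ℝ D]
  have hABnn : (0:M →L[ℂ] M) ≤ cfc fA D * cfc fB D := by
    rw [← cfc_mul fA fB D hcA.continuousOn hcB.continuousOn]
    exact cfc_nonneg fun x _ => mul_nonneg (Real.sqrt_nonneg _) (Real.sqrt_nonneg _)
  have hABsq : (cfc fA D * cfc fB D) * (cfc fA D * cfc fB D) = 1 - D * D := by
    rw [← cfc_mul fA fB D hcA.continuousOn hcB.continuousOn,
      ← cfc_mul (fun x => fA x * fB x) (fun x => fA x * fB x) D (hcA.mul hcB).continuousOn (hcA.mul hcB).continuousOn]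
    have h : cfc (fun x => (fA x * fB x) * (fA x * fB x)) D
        = cfc (fun x : ℝ => 1 - x * x) D := by
      apply cfc_congr
      intro x hx
      have := abs_le.mp (hs x hx)
      have h1 : (0:ℝ) ≤ 1 + x := by linarith
      have h2 : (0:ℝ) ≤ 1 - x := by linarith
      simp only [hfA, hfB]
      rw [mul_mul_mul_comm, Real.mul_self_sqrt h1, Real.mul_self_sqrt h2]
      ring
    rw [h, cfc_sub (a := D) (f := fun _ => (1:ℝ)) (g := fun x => x * x), cfc_const_one ℝ D,
      cfc_mul (fun x : ℝ => x) (fun x : ℝ => x) D, cfc_id' ℝ D]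
  have hDDnonneg : (0:M →L[ℂ] M) ≤ DD :=
    (ContinuousLinearMap.nonneg_iff_isPositive DD).mpr ⟨ContinuousLinearMap.isSelfAdjoint_iff_isSymmetric.mp hDDsa, fun x => by
      simpa [ContinuousLinearMap.reApplyInnerSelf_apply] using hDDnn x⟩
  have h1 := CFC.sqrt_unique hABsq hABnn
  have h2 := CFC.sqrt_unique hDDsq hDDnonneg
  have hAB : cfc fA D * cfc fB D = DD := by rw [← h1, h2]
  exact ⟨cfc fA D, cfc fB D, cfc_predicate fA D, cfc_predicate fB D, hA2, hB2, hAB,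
    (cfc_commute_cfc fA fB D).symm.trans hAB⟩

set_option maxHeartbeats 2000000 in
/-- Parametrization of selfadjoint contractive 2×2 block operators: with `D` a
selfadjoint contraction on `M`, defect operators `D_D = (I-D²)^{1/2}` (encoded by `DD`)
and `D_{N*} = (I-NN*)^{1/2}` (encoded by `DNs`), `N` a contraction of the closure of
`ran D_D` into `K` (extended by `0`), `X` a selfadjoint contraction on the closure of
`ran D_{N*}` (extended by `0`), `C = D_D N*`, `F = -NDN* + D_{N*} X D_{N*}`, the block
operator `T = [[D, C],[C*, F]]` on `M ⊕₂ K` is a selfadjoint contraction, and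
`F' = F + N(I+D)N*`, `F'' = F - N(I-D)N*` are selfadjoint contractions with
`F' - F'' = 2NN*`. -/
theorem stmt_18 {M K : Type*} [NormedAddCommGroup M] [InnerProductSpace ℂ M] [CompleteSpace M]
    [NormedAddCommGroup K] [InnerProductSpace ℂ K] [CompleteSpace K]
    (D : M →L[ℂ] M) (hDsa : IsSelfAdjoint D) (hDc : ‖D‖ ≤ 1)
    (DD : M →L[ℂ] M) (hDDsa : IsSelfAdjoint DD) (hDDnn : ∀ f : M, 0 ≤ (⟪DD f, f⟫).re)
    (hDDsq : DD ∘L DD = 1 - D ∘L D)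
    (N : M →L[ℂ] K) (hN : ‖N‖ ≤ 1) (hN0 : ∀ m : M, DD m = 0 → N m = 0)
    (DNs : K →L[ℂ] K) (hDNssa : IsSelfAdjoint DNs) (hDNsnn : ∀ g : K, 0 ≤ (⟪DNs g, g⟫).re)
    (hDNssq : DNs ∘L DNs = 1 - N ∘L N.adjoint)
    (X : K →L[ℂ] K) (hXsa : IsSelfAdjoint X) (hXc : ‖X‖ ≤ 1)
    (hX0 : ∀ g : K, DNs g = 0 → X g = 0)
    (C : K →L[ℂ] M) (hC : C = DD ∘L N.adjoint)
    (F : K →L[ℂ] K) (hF : F = -(N ∘L D ∘L N.adjoint) + DNs ∘L X ∘L DNs)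
    (T : WithLp 2 (M × K) →L[ℂ] WithLp 2 (M × K))
    (hT : T =
      ((WithLp.prodContinuousLinearEquiv 2 ℂ M K).symm : M × K →L[ℂ] WithLp 2 (M × K)) ∘L
        ((((D ∘L ContinuousLinearMap.fst ℂ M K) + (C ∘L ContinuousLinearMap.snd ℂ M K)).prod
          ((C.adjoint ∘L ContinuousLinearMap.fst ℂ M K) +
            (F ∘L ContinuousLinearMap.snd ℂ M K))) ∘L
          ((WithLp.prodContinuousLinearEquiv 2 ℂ M K) : WithLp 2 (M × K) →L[ℂ] M × K)))
    (F' F'' : K →L[ℂ] K)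
    (hF' : F' = F + N ∘L (1 + D) ∘L N.adjoint)
    (hF'' : F'' = F - N ∘L (1 - D) ∘L N.adjoint) :
    IsSelfAdjoint T ∧ ‖T‖ ≤ 1 ∧
    IsSelfAdjoint F' ∧ ‖F'‖ ≤ 1 ∧ IsSelfAdjoint F'' ∧ ‖F''‖ ≤ 1 ∧
    F' - F'' = (2 : ℂ) • (N ∘L N.adjoint) := by
  -- symmetry of the basic operators
  have hsymD : ∀ x y : M, (⟪D x, y⟫ : ℂ) = ⟪x, D y⟫ :=
    fun x y => (ContinuousLinearMap.isSelfAdjoint_iff_isSymmetric.mp hDsa) x y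
  have hsymDNs : ∀ x y : K, (⟪DNs x, y⟫ : ℂ) = ⟪x, DNs y⟫ :=
    fun x y => (ContinuousLinearMap.isSelfAdjoint_iff_isSymmetric.mp hDNssa) x y
  have hsymX : ∀ x y : K, (⟪X x, y⟫ : ℂ) = ⟪x, X y⟫ :=
    fun x y => (ContinuousLinearMap.isSelfAdjoint_iff_isSymmetric.mp hXsa) x y
  -- pointwise formulas
  have hCapp : ∀ g : K, C g = DD (N.adjoint g) := fun g => by rw [hC]; rfl
  have hFapp : ∀ g : K, F g = -(N (D (N.adjoint g))) + DNs (X (DNs g)) := fun g => by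
    rw [hF]; rfl
  have hF'app : ∀ g : K, F' g = N (N.adjoint g) + DNs (X (DNs g)) := by
    intro g
    rw [hF']
    simp only [ContinuousLinearMap.add_apply, ContinuousLinearMap.comp_apply,
      ContinuousLinearMap.one_apply, hFapp, map_add]
    abel
  have hF''app : ∀ g : K, F'' g = -(N (N.adjoint g)) + DNs (X (DNs g)) := by
    intro g
    rw [hF'']
    simp only [ContinuousLinearMap.sub_apply, ContinuousLinearMap.add_apply,
      ContinuousLinearMap.comp_apply, ContinuousLinearMap.one_apply, hFapp, map_sub]
    abel
  -- decomposition of ⟪g, g⟫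
  have hg2 : ∀ g : K, (⟪g, g⟫ : ℂ).re
      = (⟪N.adjoint g, N.adjoint g⟫ : ℂ).re + (⟪DNs g, DNs g⟫ : ℂ).re := by
    intro g
    have h0 : DNs (DNs g) + N (N.adjoint g) = g := by
      have := ContinuousLinearMap.ext_iff.mp hDNssq g
      simp only [ContinuousLinearMap.comp_apply, ContinuousLinearMap.sub_apply,
        ContinuousLinearMap.one_apply] at this
      rw [this]; abel
    have e1 : (⟪DNs (DNs g), g⟫ : ℂ) = ⟪DNs g, DNs g⟫ := hsymDNs (DNs g) g
    have e2 : (⟪N (N.adjoint g), g⟫ : ℂ) = ⟪N.adjoint g, N.adjoint g⟫ :=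
      (ContinuousLinearMap.adjoint_inner_right N (N.adjoint g) g).symm
    calc (⟪g, g⟫ : ℂ).re = (⟪DNs (DNs g) + N (N.adjoint g), g⟫ : ℂ).re := by rw [h0]
      _ = _ := by rw [inner_add_left, e1, e2, Complex.add_re]; ring
  -- nonnegativity of inner self
  have hnnK : ∀ w : K, 0 ≤ (⟪w, w⟫ : ℂ).re := fun w => by
    simpa using inner_self_nonneg (𝕜 := ℂ) (x := w)
  have hnnM : ∀ w : M, 0 ≤ (⟪w, w⟫ : ℂ).re := fun w => by
    simpa using inner_self_nonneg (𝕜 := ℂ) (x := w)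
  -- contraction bound for X
  have hXb : ∀ v : K, |(⟪X v, v⟫ : ℂ).re| ≤ (⟪v, v⟫ : ℂ).re := by
    intro v
    have h1 : |(⟪X v, v⟫ : ℂ).re| ≤ ‖(⟪X v, v⟫ : ℂ)‖ := Complex.abs_re_le_norm _
    have h2 : ‖(⟪X v, v⟫ : ℂ)‖ ≤ ‖X v‖ * ‖v‖ := norm_inner_le_norm _ _
    have h3 : ‖X v‖ ≤ ‖X‖ * ‖v‖ := X.le_opNorm v
    have h4 : (⟪v, v⟫ : ℂ).re = ‖v‖ ^ 2 := by
      simpa using (inner_self_eq_norm_sq (𝕜 := ℂ) (x := v))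
    have h5 : ‖X v‖ * ‖v‖ ≤ (‖X‖ * ‖v‖) * ‖v‖ :=
      mul_le_mul_of_nonneg_right h3 (norm_nonneg v)
    have h6 : (‖X‖ * ‖v‖) * ‖v‖ ≤ 1 * ‖v‖ * ‖v‖ :=
      mul_le_mul_of_nonneg_right (mul_le_mul_of_nonneg_right hXc (norm_nonneg v)) (norm_nonneg v)
    rw [h4, pow_two]
    linarith
  -- symmetry of F, F', F''
  have hsymNDN : ∀ a b : K, (⟪N (D (N.adjoint a)), b⟫ : ℂ) = ⟪a, N (D (N.adjoint b))⟫ := by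
    intro a b
    calc (⟪N (D (N.adjoint a)), b⟫ : ℂ)
        = ⟪D (N.adjoint a), N.adjoint b⟫ :=
          (ContinuousLinearMap.adjoint_inner_right N _ b).symm
      _ = ⟪N.adjoint a, D (N.adjoint b)⟫ := hsymD _ _
      _ = ⟪a, N (D (N.adjoint b))⟫ := ContinuousLinearMap.adjoint_inner_left N _ a
  have hsymW : ∀ a b : K, (⟪DNs (X (DNs a)), b⟫ : ℂ) = ⟪a, DNs (X (DNs b))⟫ := by
    intro a b
    calc (⟪DNs (X (DNs a)), b⟫ : ℂ) = ⟪X (DNs a), DNs b⟫ := hsymDNs _ _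
      _ = ⟪DNs a, X (DNs b)⟫ := hsymX _ _
      _ = ⟪a, DNs (X (DNs b))⟫ := hsymDNs _ _
  have hsymNN : ∀ a b : K, (⟪N (N.adjoint a), b⟫ : ℂ) = ⟪a, N (N.adjoint b)⟫ := by
    intro a b
    calc (⟪N (N.adjoint a), b⟫ : ℂ)
        = ⟪N.adjoint a, N.adjoint b⟫ := (ContinuousLinearMap.adjoint_inner_right N _ b).symm
      _ = ⟪a, N (N.adjoint b)⟫ := ContinuousLinearMap.adjoint_inner_left N _ a
  have hsymF : ∀ a b : K, (⟪F a, b⟫ : ℂ) = ⟪a, F b⟫ := by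
    intro a b
    rw [hFapp a, hFapp b]
    rw [inner_add_left, inner_add_right, inner_neg_left, inner_neg_right,
      hsymNDN a b, hsymW a b]
  have hF'sa : IsSelfAdjoint F' := by
    rw [ContinuousLinearMap.isSelfAdjoint_iff_isSymmetric]
    intro a b
    show (⟪F' a, b⟫ : ℂ) = ⟪a, F' b⟫
    rw [hF'app a, hF'app b, inner_add_left, inner_add_right, hsymNN a b, hsymW a b]
  have hF''sa : IsSelfAdjoint F'' := by
    rw [ContinuousLinearMap.isSelfAdjoint_iff_isSymmetric]
    intro a b
    show (⟪F'' a, b⟫ : ℂ) = ⟪a, F'' b⟫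
    rw [hF''app a, hF''app b, inner_add_left, inner_add_right, inner_neg_left,
      inner_neg_right, hsymNN a b, hsymW a b]
  -- the factorization DD = A B
  have hDDsq' : DD * DD = 1 - D * D := hDDsq
  obtain ⟨A, B, hAsa, hBsa, hA2, hB2, hAB, hBA⟩ := defect_factor hDsa hDc hDDsa hDDnn hDDsq'
  have hsymA : ∀ x y : M, (⟪A x, y⟫ : ℂ) = ⟪x, A y⟫ :=
    fun x y => (ContinuousLinearMap.isSelfAdjoint_iff_isSymmetric.mp hAsa) x y
  have hsymB : ∀ x y : M, (⟪B x, y⟫ : ℂ) = ⟪x, B y⟫ :=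
    fun x y => (ContinuousLinearMap.isSelfAdjoint_iff_isSymmetric.mp hBsa) x y
  have hAAf : ∀ m : M, (⟪A m, A m⟫ : ℂ).re = (⟪m, m⟫ : ℂ).re + (⟪D m, m⟫ : ℂ).re := by
    intro m
    have h1 : A (A m) = m + D m := by
      have := ContinuousLinearMap.ext_iff.mp hA2 m
      simpa [ContinuousLinearMap.mul_apply, ContinuousLinearMap.add_apply,
        ContinuousLinearMap.one_apply] using this
    rw [← hsymA (A m) m, h1, inner_add_left, Complex.add_re]
  have hBBf : ∀ m : M, (⟪B m, B m⟫ : ℂ).re = (⟪m, m⟫ : ℂ).re - (⟪D m, m⟫ : ℂ).re := by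
    intro m
    have h1 : B (B m) = m - D m := by
      have := ContinuousLinearMap.ext_iff.mp hB2 m
      simpa [ContinuousLinearMap.mul_apply, ContinuousLinearMap.sub_apply,
        ContinuousLinearMap.one_apply] using this
    rw [← hsymB (B m) m, h1, inner_sub_left, Complex.sub_re]
  have hcross1 : ∀ m f : M, (⟪DD m, f⟫ : ℂ) = ⟪B m, A f⟫ := by
    intro m f
    rw [← hAB]
    exact hsymA (B m) f
  have hcross2 : ∀ m f : M, (⟪DD m, f⟫ : ℂ) = ⟪A m, B f⟫ := by
    intro m f
    rw [← hBA]
    exact hsymB (A m) f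
  -- block inner product formulas
  have hTxy : ∀ x y : WithLp 2 (M × K), (⟪T x, y⟫ : ℂ)
      = ⟪D x.fst + C x.snd, y.fst⟫ + ⟪C.adjoint x.fst + F x.snd, y.snd⟫ := by
    intro x y; rw [hT]; rfl
  have hxy : ∀ x y : WithLp 2 (M × K), (⟪x, y⟫ : ℂ) = ⟪x.fst, y.fst⟫ + ⟪x.snd, y.snd⟫ :=
    fun x y => WithLp.prod_inner_apply x y
  -- expansion of squares
  have hplus : ∀ a b : M, (⟪a + b, a + b⟫ : ℂ).re
      = (⟪a, a⟫ : ℂ).re + 2 * (⟪b, a⟫ : ℂ).re + (⟪b, b⟫ : ℂ).re := by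
    intro a b
    have h : (⟪a, b⟫ : ℂ).re = (⟪b, a⟫ : ℂ).re := by
      rw [← inner_conj_symm]; exact Complex.conj_re _
    simp only [inner_add_left, inner_add_right, Complex.add_re]
    linarith
  have hminus : ∀ a b : M, (⟪a - b, a - b⟫ : ℂ).re
      = (⟪a, a⟫ : ℂ).re - 2 * (⟪b, a⟫ : ℂ).re + (⟪b, b⟫ : ℂ).re := by
    intro a b
    have h : (⟪a, b⟫ : ℂ).re = (⟪b, a⟫ : ℂ).re := by
      rw [← inner_conj_symm]; exact Complex.conj_re _
    simp only [inner_sub_left, inner_sub_right, Complex.sub_re]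
    linarith
  -- the real quadratic form of T
  have hTre : ∀ x : WithLp 2 (M × K), (⟪T x, x⟫ : ℂ).re
      = (⟪D x.fst, x.fst⟫ : ℂ).re + 2 * (⟪DD (N.adjoint x.snd), x.fst⟫ : ℂ).re
        - (⟪D (N.adjoint x.snd), N.adjoint x.snd⟫ : ℂ).re
        + (⟪X (DNs x.snd), DNs x.snd⟫ : ℂ).re := by
    intro x
    rw [hTxy x x]
    rw [hCapp, hFapp]
    have e1 : (⟪C.adjoint x.fst, x.snd⟫ : ℂ).re = (⟪DD (N.adjoint x.snd), x.fst⟫ : ℂ).re := by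
      rw [ContinuousLinearMap.adjoint_inner_left C x.snd x.fst, hCapp, ← inner_conj_symm]
      exact Complex.conj_re _
    have e2 : (⟪N (D (N.adjoint x.snd)), x.snd⟫ : ℂ)
        = ⟪D (N.adjoint x.snd), N.adjoint x.snd⟫ :=
      (ContinuousLinearMap.adjoint_inner_right N _ x.snd).symm
    have e3 : (⟪DNs (X (DNs x.snd)), x.snd⟫ : ℂ) = ⟪X (DNs x.snd), DNs x.snd⟫ :=
      hsymDNs _ _
    rw [inner_add_left, inner_add_left, inner_add_left, inner_neg_left]
    simp only [Complex.add_re, Complex.neg_re]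
    rw [e1, e2, e3]
    ring
  have hxre : ∀ x : WithLp 2 (M × K), (⟪x, x⟫ : ℂ).re
      = (⟪x.fst, x.fst⟫ : ℂ).re + (⟪N.adjoint x.snd, N.adjoint x.snd⟫ : ℂ).re
        + (⟪DNs x.snd, DNs x.snd⟫ : ℂ).re := by
    intro x
    rw [hxy x x, Complex.add_re, hg2 x.snd]
    ring
  -- selfadjointness of T
  have hTsa : IsSelfAdjoint T := by
    rw [ContinuousLinearMap.isSelfAdjoint_iff_isSymmetric]
    intro x y
    show (⟪T x, y⟫ : ℂ) = ⟪x, T y⟫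
    rw [hTxy x y, hxy x (T y)]
    have hTy1 : (T y).fst = D y.fst + C y.snd := by rw [hT]; rfl
    have hTy2 : (T y).snd = C.adjoint y.fst + F y.snd := by rw [hT]; rfl
    rw [hTy1, hTy2]
    rw [inner_add_left, inner_add_left, inner_add_right, inner_add_right]
    have e1 : (⟪D x.fst, y.fst⟫ : ℂ) = ⟪x.fst, D y.fst⟫ := hsymD _ _
    have e2 : (⟪C x.snd, y.fst⟫ : ℂ) = ⟪x.snd, C.adjoint y.fst⟫ :=
      (ContinuousLinearMap.adjoint_inner_right C x.snd y.fst).symm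
    have e3 : (⟪C.adjoint x.fst, y.snd⟫ : ℂ) = ⟪x.fst, C y.snd⟫ :=
      ContinuousLinearMap.adjoint_inner_left C y.snd x.fst
    have e4 : (⟪F x.snd, y.snd⟫ : ℂ) = ⟪x.snd, F y.snd⟫ := hsymF _ _
    rw [e1, e2, e3, e4]
    ring
  refine ⟨hTsa, ?_, hF'sa, ?_, hF''sa, ?_, ?_⟩
  · -- ‖T‖ ≤ 1
    apply sa_norm_le_one hTsa
    · intro x
      have key : (⟪x, x⟫ : ℂ).re - (⟪T x, x⟫ : ℂ).re
          = (⟪B x.fst - A (N.adjoint x.snd), B x.fst - A (N.adjoint x.snd)⟫ : ℂ).re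
            + ((⟪DNs x.snd, DNs x.snd⟫ : ℂ).re - (⟪X (DNs x.snd), DNs x.snd⟫ : ℂ).re) := by
        rw [hTre x, hxre x, hminus (B x.fst) (A (N.adjoint x.snd))]
        have c1 := congrArg Complex.re (hcross2 (N.adjoint x.snd) x.fst)
        have c2 : (⟪A (N.adjoint x.snd), B x.fst⟫ : ℂ).re
            = (⟪B x.fst, A (N.adjoint x.snd)⟫ : ℂ).re := by
          rw [← inner_conj_symm]; exact Complex.conj_re _
        have b1 := hBBf x.fst
        have a1 := hAAf (N.adjoint x.snd)
        rw [← c2, ← c1] at *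
        linarith
      have p1 := hnnM (B x.fst - A (N.adjoint x.snd))
      have p2 := abs_le.mp (hXb (DNs x.snd))
      linarith
    · intro x
      have key : (⟪x, x⟫ : ℂ).re + (⟪T x, x⟫ : ℂ).re
          = (⟪A x.fst + B (N.adjoint x.snd), A x.fst + B (N.adjoint x.snd)⟫ : ℂ).re
            + ((⟪DNs x.snd, DNs x.snd⟫ : ℂ).re + (⟪X (DNs x.snd), DNs x.snd⟫ : ℂ).re) := by
        rw [hTre x, hxre x, hplus (A x.fst) (B (N.adjoint x.snd))]
        have c1 := congrArg Complex.re (hcross1 (N.adjoint x.snd) x.fst)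
        have b1 := hBBf (N.adjoint x.snd)
        have a1 := hAAf x.fst
        rw [← c1] at *
        linarith
      have p1 := hnnM (A x.fst + B (N.adjoint x.snd))
      have p2 := abs_le.mp (hXb (DNs x.snd))
      linarith
  · -- ‖F'‖ ≤ 1
    have hre : ∀ g : K, (⟪F' g, g⟫ : ℂ).re
        = (⟪N.adjoint g, N.adjoint g⟫ : ℂ).re + (⟪X (DNs g), DNs g⟫ : ℂ).re := by
      intro g
      rw [hF'app g, inner_add_left, Complex.add_re]
      have e2 : (⟪N (N.adjoint g), g⟫ : ℂ) = ⟪N.adjoint g, N.adjoint g⟫ :=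
        (ContinuousLinearMap.adjoint_inner_right N _ g).symm
      have e3 : (⟪DNs (X (DNs g)), g⟫ : ℂ) = ⟪X (DNs g), DNs g⟫ := hsymDNs _ _
      rw [e2, e3]
    apply sa_norm_le_one hF'sa
    · intro g
      have := abs_le.mp (hXb (DNs g))
      rw [hre g, hg2 g]
      linarith
    · intro g
      have := abs_le.mp (hXb (DNs g))
      have := hnnM (N.adjoint g)
      rw [hre g, hg2 g]
      linarith
  · -- ‖F''‖ ≤ 1
    have hre : ∀ g : K, (⟪F'' g, g⟫ : ℂ).re
        = -(⟪N.adjoint g, N.adjoint g⟫ : ℂ).re + (⟪X (DNs g), DNs g⟫ : ℂ).re := by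
      intro g
      rw [hF''app g, inner_add_left, inner_neg_left, Complex.add_re, Complex.neg_re]
      have e2 : (⟪N (N.adjoint g), g⟫ : ℂ) = ⟪N.adjoint g, N.adjoint g⟫ :=
        (ContinuousLinearMap.adjoint_inner_right N _ g).symm
      have e3 : (⟪DNs (X (DNs g)), g⟫ : ℂ) = ⟪X (DNs g), DNs g⟫ := hsymDNs _ _
      rw [e2, e3]
    apply sa_norm_le_one hF''sa
    · intro g
      have := abs_le.mp (hXb (DNs g))
      have := hnnM (N.adjoint g)
      rw [hre g, hg2 g]
      linarith
    · intro g
      have := abs_le.mp (hXb (DNs g))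
      rw [hre g, hg2 g]
      linarith
  · -- F' - F'' = 2 N N*
    ext g
    have h1 := hF'app g
    have h2 := hF''app g
    simp only [ContinuousLinearMap.sub_apply, h1, h2, ContinuousLinearMap.smul_apply,
      ContinuousLinearMap.comp_apply]
    rw [two_smul]
    abel
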